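/- arXiv:1609.06414 — 5 statements merged into one kernel-verified Lean document; each statement's English description precedes it below -/
import Mathlib

section
/- Let n ≥ 2 be an integer, let F be a finite field with q elements such that n divides q − 1, and let χ be a multiplicative character of F with values in ℂ (extended by χ(0) = 0) whose order is exactly n. Then for every integer i with 1 ≤ i ≤ n − 1, ∑_{x ∈ F} ∑_{y ∈ F} χ^i(f_n(x,y)) = χ(−1)^i · ∑_{x ∈ F} ∑_{y ∈ F} χ^{n−i}(f_n(x,y)), where f_n(x,y) = (xy)^{n−1}(1−x)(1−y)(1−xy)^{n−1}. -/
/-- The polynomial `f_n(x,y) = (xy)^{n-1}(1-x)(1-y)(1-xy)^{n-1}`. -/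
def fpoly (n : ℕ) {F : Type*} [CommRing F] (x y : F) : F :=
  (x * y) ^ (n - 1) * (1 - x) * (1 - y) * (1 - x * y) ^ (n - 1)

private lemma mulchar_ne_zero {F : Type*} [Field F] (χ : MulChar F ℂ) {a : F}
    (ha : a ≠ 0) : χ a ≠ 0 := by
  intro h
  have h1 : χ a * χ a⁻¹ = 1 := by rw [← map_mul, mul_inv_cancel₀ ha, map_one]
  rw [h, zero_mul] at h1
  exact zero_ne_one h1

/-- The key algebraic identity: with `A = (1-x)/(x(y-1))`, `B = (y-1)/(y(1-x))`,
we have `f(A,B) * f(x,y) = -c^n` where `c = -(1-xy)²/(xy)`. -/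
private lemma fpoly_key {F : Type*} [Field F] (m : ℕ) (x y A B : F)
    (hx0 : x ≠ 0) (hx1 : x ≠ 1) (hy0 : y ≠ 0) (hy1 : y ≠ 1) (hxy : x*y ≠ 1)
    (hA : A = (1-x)/(x*(y-1))) (hB : B = (y-1)/(y*(1-x))) :
    fpoly (m+1) A B * fpoly (m+1) x y = -(-(1 - x*y)^2/(x*y))^(m+1) := by
  have h1x : (1:F) - x ≠ 0 := sub_ne_zero_of_ne (Ne.symm hx1)
  have hy1' : y - 1 ≠ 0 := sub_ne_zero_of_ne hy1
  have hxy' : x*y - 1 ≠ 0 := sub_ne_zero_of_ne hxy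
  have hu : x*y ≠ 0 := mul_ne_zero hx0 hy0
  have e1 : A*B = (x*y)⁻¹ := by subst hA hB; field_simp
  have e2 : 1 - A = -((1-x*y)/(x*(y-1))) := by subst hA; field_simp; ring
  have e3 : 1 - B = (1-x*y)/(y*(1-x)) := by subst hB; field_simp; ring
  have e4 : (1:F) - (x*y)⁻¹ = -((1-x*y)/(x*y)) := by field_simp; ring
  simp only [fpoly, Nat.add_sub_cancel, e1, e2, e3, e4]
  have hA1 : (x*y)⁻¹ * -((1-x*y)/(x*y)) * (x*y) * (1-x*y) = -((1-x*y)^2/(x*y)) := by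
    field_simp
  have hr : -((1-x*y)/(x*(y-1))) * ((1-x*y)/(y*(1-x))) * ((1-x)*(1-y))
      = (1-x*y)^2/(x*y) := by field_simp; ring
  calc (x*y)⁻¹^m * -((1-x*y)/(x*(y-1))) * ((1-x*y)/(y*(1-x))) * (-((1-x*y)/(x*y)))^m
        * ((x*y)^m * (1-x) * (1-y) * (1-x*y)^m)
      = ((x*y)⁻¹^m * (-((1-x*y)/(x*y)))^m * (x*y)^m * (1-x*y)^m)
        * (-((1-x*y)/(x*(y-1))) * ((1-x*y)/(y*(1-x))) * ((1-x)*(1-y))) := by ring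
    _ = ((x*y)⁻¹ * -((1-x*y)/(x*y)) * (x*y) * (1-x*y))^m
        * (-((1-x*y)/(x*(y-1))) * ((1-x*y)/(y*(1-x))) * ((1-x)*(1-y))) := by
        rw [← mul_pow, ← mul_pow, ← mul_pow]
    _ = (-((1-x*y)^2/(x*y)))^m * ((1-x*y)^2/(x*y)) := by rw [hA1, hr]
    _ = -(-(1-x*y)^2/(x*y))^(m+1) := by rw [pow_succ]; ring

/-- Character-level consequence: if `Q * P = -c^n` with everything nonzero and
`χ^n = 1`, then `χ^i P = χ(-1)^i * χ^(n-i) Q`. -/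
private lemma char_key {F : Type*} [Field F] (χ : MulChar F ℂ) (n i : ℕ)
    (hχn : χ ^ n = 1) (hi : i ≠ 0) (hin : i ≤ n) (hn : n ≠ 0)
    (P Q c : F) (hc : c ≠ 0) (hP : P ≠ 0) (hPQ : Q * P = -c^n) :
    (χ ^ i) P = (χ (-1)) ^ i * (χ ^ (n - i)) Q := by
  have hQ : Q ≠ 0 := by
    intro h
    rw [h, zero_mul] at hPQ
    exact neg_ne_zero.mpr (pow_ne_zero n hc) hPQ.symm
  have hχiQ : (χ ^ i) Q ≠ 0 := by
    rw [MulChar.pow_apply' χ hi]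
    exact pow_ne_zero _ (mulchar_ne_zero χ hQ)
  have hcn : (χ ^ i) (c ^ n) = 1 := by
    rw [map_pow, MulChar.pow_apply' χ hi, ← pow_mul, mul_comm i n, pow_mul,
      ← MulChar.pow_apply' χ hn, hχn, MulChar.one_apply (isUnit_iff_ne_zero.mpr hc), one_pow]
  have h1 : (χ ^ i) Q * (χ ^ i) P = (χ (-1)) ^ i := by
    have h2 := congrArg (χ ^ i) hPQ
    rw [map_mul, show -c^n = -1 * c^n by ring, map_mul, hcn, mul_one,
      MulChar.pow_apply' χ hi (-1)] at h2
    exact h2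
  have h2 : (χ ^ (n - i)) Q * (χ ^ i) Q = 1 := by
    rw [← MulChar.mul_apply, ← pow_add, Nat.sub_add_cancel hin, hχn,
      MulChar.one_apply (isUnit_iff_ne_zero.mpr hQ)]
  apply mul_right_cancel₀ hχiQ
  rw [mul_assoc, h2, mul_one, ← h1, mul_comm]

/-- **Identity (5.10)** of the paper.  Let `F` be a finite field with `q`
elements, `n ≥ 2` with `n ∣ q - 1`, and `χ` a multiplicative character of `F`
with values in `ℂ` of exact order `n`.  Then for every `1 ≤ i ≤ n - 1`,
`∑_{x,y} χ^i(f_n(x,y)) = χ(-1)^i · ∑_{x,y} χ^{n-i}(f_n(x,y))`. -/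
theorem char_sum_reflection
    {F : Type*} [Field F] [Fintype F]
    (n : ℕ) (hn : 2 ≤ n) (hdvd : n ∣ Fintype.card F - 1)
    (χ : MulChar F ℂ) (hord : orderOf χ = n)
    (i : ℕ) (hi1 : 1 ≤ i) (hi2 : i ≤ n - 1) :
    ∑ x : F, ∑ y : F, (χ ^ i) (fpoly n x y)
      = (χ (-1)) ^ i * ∑ x : F, ∑ y : F, (χ ^ (n - i)) (fpoly n x y) := by
  classical
  have hi0 : i ≠ 0 := by omega
  have hin : i ≤ n := by omega
  have hn0 : n ≠ 0 := by omega
  have hm1 : n - 1 ≠ 0 := by omega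
  have hχn : χ ^ n = 1 := by rw [← hord]; exact pow_orderOf_eq_one χ
  rw [← Fintype.sum_prod_type' (fun x y => (χ ^ i) (fpoly n x y)),
      ← Fintype.sum_prod_type' (fun x y => (χ ^ (n - i)) (fpoly n x y))]
  set D : Finset (F × F) :=
    Finset.univ.filter (fun p => p.1 ≠ 0 ∧ p.1 ≠ 1 ∧ p.2 ≠ 0 ∧ p.2 ≠ 1 ∧ p.1*p.2 ≠ 1) with hD
  have hf0 : ∀ p : F × F, p ∉ D → fpoly n p.1 p.2 = 0 := by
    intro p hp
    simp only [hD, Finset.mem_filter, Finset.mem_univ, true_and, not_and_or, not_not] at hp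
    rcases hp with h | h | h | h | h
    · simp [fpoly, h, zero_pow hm1]
    · simp [fpoly, h]
    · simp [fpoly, h, zero_pow hm1]
    · simp [fpoly, h]
    · simp [fpoly, h, zero_pow hm1]
  have hres : ∀ k : ℕ, ∑ p : F × F, (χ ^ k) (fpoly n p.1 p.2)
      = ∑ p ∈ D, (χ ^ k) (fpoly n p.1 p.2) := by
    intro k
    refine (Finset.sum_subset (Finset.filter_subset _ _) ?_).symm
    intro p _ hp
    rw [hf0 p hp]
    exact MulChar.map_nonunit _ not_isUnit_zero
  rw [hres i, hres (n - i), Finset.mul_sum]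
  -- the membership lemma
  have hmem : ∀ p : F × F, p ∈ D →
      ((1-p.1)/(p.1*(p.2-1)), (p.2-1)/(p.2*(1-p.1))) ∈ D := by
    rintro ⟨x, y⟩ hp
    simp only [hD, Finset.mem_filter, Finset.mem_univ, true_and] at hp ⊢
    obtain ⟨hx0, hx1, hy0, hy1, hxy⟩ := hp
    have h1x : (1:F) - x ≠ 0 := sub_ne_zero_of_ne (Ne.symm hx1)
    have hy1' : y - 1 ≠ 0 := sub_ne_zero_of_ne hy1
    have hd1 : x*(y-1) ≠ 0 := mul_ne_zero hx0 hy1'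
    have hd2 : y*(1-x) ≠ 0 := mul_ne_zero hy0 h1x
    refine ⟨div_ne_zero h1x hd1, ?_, div_ne_zero hy1' hd2, ?_, ?_⟩
    · intro h
      rw [div_eq_one_iff_eq hd1] at h
      exact hxy (by linear_combination -h)
    · intro h
      rw [div_eq_one_iff_eq hd2] at h
      exact hxy (by linear_combination h)
    · have e1 : (1-x)/(x*(y-1)) * ((y-1)/(y*(1-x))) = (x*y)⁻¹ := by
        field_simp
      rw [e1]
      intro h
      exact hxy (by rw [← inv_inv (x*y), h, inv_one])
  refine Finset.sum_nbij'
    (fun p => ((1-p.1)/(p.1*(p.2-1)), (p.2-1)/(p.2*(1-p.1))))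
    (fun p => ((p.2-1)/(p.2*(1-p.1)), (1-p.1)/(p.1*(p.2-1)))) hmem ?_ ?_ ?_ ?_
  · -- the inverse map sends D to D
    rintro ⟨x, y⟩ hp
    have hswap : (y, x) ∈ D := by
      simp only [hD, Finset.mem_filter, Finset.mem_univ, true_and] at hp ⊢
      exact ⟨hp.2.2.1, hp.2.2.2.1, hp.1, hp.2.1, by rw [mul_comm]; exact hp.2.2.2.2⟩
    have h1 : (y-1)/(y*(1-x)) = (1-y)/(y*(x-1)) := by
      rw [show y-1 = -(1-y) by ring, show y*(1-x) = -(y*(x-1)) by ring, neg_div_neg_eq]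
    have h2 : (1-x)/(x*(y-1)) = (x-1)/(x*(1-y)) := by
      rw [show (1:F)-x = -(x-1) by ring, show x*(y-1) = -(x*(1-y)) by ring, neg_div_neg_eq]
    show ((y-1)/(y*(1-x)), (1-x)/(x*(y-1))) ∈ D
    rw [h1, h2]
    simpa using hmem (y, x) hswap
  · -- left inverse
    rintro ⟨x, y⟩ hp
    simp only [hD, Finset.mem_filter, Finset.mem_univ, true_and] at hp
    obtain ⟨hx0, hx1, hy0, hy1, hxy⟩ := hp
    have h1x : (1:F) - x ≠ 0 := sub_ne_zero_of_ne (Ne.symm hx1)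
    have hy1' : y - 1 ≠ 0 := sub_ne_zero_of_ne hy1
    have hxy' : x*y - 1 ≠ 0 := sub_ne_zero_of_ne hxy
    have hA : (1-x)/(x*(y-1)) ≠ 0 := div_ne_zero h1x (mul_ne_zero hx0 hy1')
    have hB : (y-1)/(y*(1-x)) ≠ 0 := div_ne_zero hy1' (mul_ne_zero hy0 h1x)
    have e2 : 1 - (1-x)/(x*(y-1)) = -((1-x*y)/(x*(y-1))) := by field_simp; ring
    have e3 : (y-1)/(y*(1-x)) - 1 = -((1-x*y)/(y*(1-x))) := by field_simp; ring
    have hxy'' : (1:F) - x*y ≠ 0 := sub_ne_zero_of_ne (Ne.symm hxy)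
    ext
    · show ((y-1)/(y*(1-x)) - 1) / ((y-1)/(y*(1-x)) * (1 - (1-x)/(x*(y-1)))) = x
      rw [e2, e3]
      field_simp
    · show (1 - (1-x)/(x*(y-1))) / ((1-x)/(x*(y-1)) * ((y-1)/(y*(1-x)) - 1)) = y
      rw [e2, e3]
      field_simp
  · -- right inverse
    rintro ⟨x, y⟩ hp
    simp only [hD, Finset.mem_filter, Finset.mem_univ, true_and] at hp
    obtain ⟨hx0, hx1, hy0, hy1, hxy⟩ := hp
    have h1x : (1:F) - x ≠ 0 := sub_ne_zero_of_ne (Ne.symm hx1)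
    have hy1' : y - 1 ≠ 0 := sub_ne_zero_of_ne hy1
    have hxy' : x*y - 1 ≠ 0 := sub_ne_zero_of_ne hxy
    have e2 : 1 - (y-1)/(y*(1-x)) = (1-x*y)/(y*(1-x)) := by field_simp; ring
    have e3 : (1-x)/(x*(y-1)) - 1 = (1-x*y)/(x*(y-1)) := by field_simp; ring
    have hxy'' : (1:F) - x*y ≠ 0 := sub_ne_zero_of_ne (Ne.symm hxy)
    ext
    · show (1 - (y-1)/(y*(1-x))) / ((y-1)/(y*(1-x)) * ((1-x)/(x*(y-1)) - 1)) = x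
      rw [e2, e3]
      field_simp
    · show ((1-x)/(x*(y-1)) - 1) / ((1-x)/(x*(y-1)) * (1 - (y-1)/(y*(1-x)))) = y
      rw [e2, e3]
      field_simp
  · -- the main pointwise identity
    rintro ⟨x, y⟩ hp
    simp only [hD, Finset.mem_filter, Finset.mem_univ, true_and] at hp
    obtain ⟨hx0, hx1, hy0, hy1, hxy⟩ := hp
    have h1x : (1:F) - x ≠ 0 := sub_ne_zero_of_ne (Ne.symm hx1)
    have h1y : (1:F) - y ≠ 0 := sub_ne_zero_of_ne (Ne.symm hy1)
    have hxy'' : (1:F) - x*y ≠ 0 := sub_ne_zero_of_ne (Ne.symm hxy)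
    have hu : x*y ≠ 0 := mul_ne_zero hx0 hy0
    have hP : fpoly n x y ≠ 0 := by
      unfold fpoly
      exact mul_ne_zero (mul_ne_zero (mul_ne_zero (pow_ne_zero _ hu) h1x) h1y)
        (pow_ne_zero _ hxy'')
    have hc : -(1 - x*y)^2/(x*y) ≠ 0 :=
      div_ne_zero (neg_ne_zero.mpr (pow_ne_zero _ hxy'')) hu
    obtain ⟨m, rfl⟩ : ∃ m, n = m + 1 := ⟨n - 1, by omega⟩
    have hPQ := fpoly_key m x y ((1-x)/(x*(y-1))) ((y-1)/(y*(1-x)))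
      hx0 hx1 hy0 hy1 hxy rfl rfl
    exact char_key χ (m+1) i hχn hi0 hin hn0 (fpoly (m+1) x y)
      (fpoly (m+1) ((1-x)/(x*(y-1))) ((y-1)/(y*(1-x)))) (-(1 - x*y)^2/(x*y))
      hc hP hPQ
end

section
/- Let n ≥ 2 be an integer, let F be a finite field, and let χ be a multiplicative character of F with values in ℂ (extended by χ(0) = 0) such that χ^n is the trivial character. Then ∑_{x ∈ F} ∑_{y ∈ F} χ(f_n(x,y)) = ∑ χ((1−x)(1−y) / (xy(1−xy))), where f_n(x,y) = (xy)^{n−1}(1−x)(1−y)(1−xy)^{n−1} and the sum on the right is over all pairs (x, y) with x, y ∈ F ∖ {0}, x ≠ 1, y ≠ 1 and xy ≠ 1. -/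
/-- Section 5.5 of the paper: for a multiplicative character `χ` of a finite
field `F` with `χ^n` trivial, the character sum of `χ ∘ f_n` over `F²` equals
the sum of `χ((1-x)(1-y)/(xy(1-xy)))` over the pairs `(x,y)` with
`x, y ≠ 0`, `x ≠ 1`, `y ≠ 1`, `xy ≠ 1`. -/
theorem char_sum_eq_g_sum
    {F : Type*} [Field F] [Fintype F] [DecidableEq F]
    (n : ℕ) (hn : 2 ≤ n)
    (χ : MulChar F ℂ) (htriv : χ ^ n = 1) :
    ∑ x : F, ∑ y : F, χ (fpoly n x y)
      = ∑ p ∈ Finset.univ.filter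
          (fun p : F × F => p.1 ≠ 0 ∧ p.2 ≠ 0 ∧ p.1 ≠ 1 ∧ p.2 ≠ 1 ∧ p.1 * p.2 ≠ 1),
          χ ((1 - p.1) * (1 - p.2) / (p.1 * p.2 * (1 - p.1 * p.2))) := by
  have hn1 : 1 ≤ n - 1 := by omega
  rw [← Fintype.sum_prod_type']
  rw [← Finset.sum_filter_of_ne (p := fun p : F × F =>
      p.1 ≠ 0 ∧ p.2 ≠ 0 ∧ p.1 ≠ 1 ∧ p.2 ≠ 1 ∧ p.1 * p.2 ≠ 1)
      (fun p _ hne => ?_)]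
  · apply Finset.sum_congr rfl
    rintro ⟨x, y⟩ hp
    simp only [Finset.mem_filter] at hp
    obtain ⟨-, hx0, hy0, hx1, hy1, hxy1⟩ := hp
    have hx1' : (1 : F) - x ≠ 0 := sub_ne_zero.mpr (Ne.symm hx1)
    have hy1' : (1 : F) - y ≠ 0 := sub_ne_zero.mpr (Ne.symm hy1)
    have hxy1' : (1 : F) - x * y ≠ 0 := sub_ne_zero.mpr (Ne.symm hxy1)
    have hxy0 : x * y ≠ 0 := mul_ne_zero hx0 hy0
    have hd : x * y * (1 - x * y) ≠ 0 := mul_ne_zero hxy0 hxy1'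
    have key : fpoly n x y
        = ((1 - x) * (1 - y) / (x * y * (1 - x * y))) * (x * y * (1 - x * y)) ^ n := by
      have hpow : (x * y * (1 - x * y)) ^ n
          = (x * y * (1 - x * y)) * ((x * y) ^ (n - 1) * (1 - x * y) ^ (n - 1)) := by
        rw [← mul_pow, ← pow_succ']
        congr 1
        omega
      rw [hpow]
      unfold fpoly
      field_simp
    rw [key, map_mul, map_pow]
    have : χ (x * y * (1 - x * y)) ^ n = (χ ^ n) (x * y * (1 - x * y)) := by
      simp [MulChar.pow_apply' χ (by omega : n ≠ 0)]
    rw [this, htriv, MulChar.one_apply (isUnit_iff_ne_zero.mpr hd), mul_one]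
  · have hz : fpoly n p.1 p.2 ≠ 0 := by
      intro h
      exact hne (by rw [h]; exact χ.map_nonunit (by simp))
    simp only [fpoly, mul_ne_zero_iff, pow_ne_zero_iff (by omega : n - 1 ≠ 0)] at hz
    obtain ⟨⟨⟨⟨hx0, hy0⟩, hx1⟩, hy1⟩, hxy1⟩ := hz
    exact ⟨hx0, hy0, fun h => hx1 (by simp [h]), fun h => hy1 (by simp [h]),
      fun h => hxy1 (by simp [h])⟩
end

section
/- Let K be a field, n ≥ 2 an integer, ζ ∈ K with ζ^n = −1, and let g : K → K be a ring homomorphism (automatically injective) such that g(ζ) = ζ^p for some odd integer p. On triples (x, y, s) ∈ K³ with s ≠ 0 and xy ≠ 1, define A(x,y,s) = (1−x, 1/(1−xy), ζ(1−x)(1−y)x²y/(s(1−xy))) and, for an integer m, let Z^m denote the map (x,y,s) ↦ (x, y, ζ^{−2m}s); let ḡ denote the coordinatewise application of g. Then for every such triple: (i) ḡ(A(x,y,s)) = Z^{(1−p)/2}(A(ḡ(x,y,s))); and (ii) ḡ(Z^1(x,y,s)) = Z^p(ḡ(x,y,s)). -/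
/-- The symmetry `A` of the surface `E_n : s^n = f_n(x,y)`, where `ζ` plays
the role of a primitive `2n`-th root of unity:
`A(x,y,s) = (1-x, 1/(1-xy), ζ(1-x)(1-y)x²y/(s(1-xy)))`. -/
def Amap {K : Type*} [Field K] (ζ : K) (p : K × K × K) : K × K × K :=
  (1 - p.1, 1 / (1 - p.1 * p.2.1),
    ζ * (1 - p.1) * (1 - p.2.1) * p.1 ^ 2 * p.2.1 / (p.2.2 * (1 - p.1 * p.2.1)))

/-- The symmetry `Z^m : (x,y,s) ↦ (x, y, ζ^{-2m} s)`, where `ζ²` plays the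
role of the `n`-th root of unity `ζ_n`. -/
def Zpow {K : Type*} [Field K] (ζ : K) (m : ℤ) (p : K × K × K) : K × K × K :=
  (p.1, p.2.1, ζ ^ (-2 * m) * p.2.2)

/-- Coordinatewise application of a ring endomorphism `g` of `K`. -/
def coordMap {K : Type*} [Field K] (g : K →+* K) (p : K × K × K) : K × K × K :=
  (g p.1, g p.2.1, g p.2.2)

/-- **Lemma 5.8** of the paper (point level).  Let `K` be a field, `n ≥ 2`,
`ζ ∈ K` with `ζ^n = -1`, and `g : K → K` a ring homomorphism with
`g(ζ) = ζ^p` for an odd integer `p`.  Then on triples `(x,y,s)` with `s ≠ 0`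
and `xy ≠ 1` one has `ḡ ∘ A = Z^{(1-p)/2} ∘ A ∘ ḡ` and `ḡ ∘ Z = Z^p ∘ ḡ`. -/
theorem frobenius_commutation
    {K : Type*} [Field K] (n : ℕ) (hn : 2 ≤ n) (ζ : K) (hζ : ζ ^ n = -1)
    (g : K →+* K) (p : ℤ) (hp : Odd p) (hg : g ζ = ζ ^ p)
    (x y s : K) (hs : s ≠ 0) (hxy : x * y ≠ 1) :
    coordMap g (Amap ζ (x, y, s))
        = Zpow ζ ((1 - p) / 2) (Amap ζ (coordMap g (x, y, s))) ∧
    coordMap g (Zpow ζ 1 (x, y, s)) = Zpow ζ p (coordMap g (x, y, s)) := by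
  have hζ0 : ζ ≠ 0 := by
    intro h
    rw [h, zero_pow (by omega)] at hζ
    exact zero_ne_one (by linear_combination -hζ)
  have h2 : -2 * ((1 - p) / 2) = p - 1 := by
    obtain ⟨k, hk⟩ := hp; omega
  have hgs : g s ≠ 0 := fun h => hs (g.injective (by simp [h]))
  have hgxy : 1 - g x * g y ≠ 0 := sub_ne_zero.mpr fun h =>
    hxy (g.injective (by rw [map_mul, map_one, ← h]))
  constructor
  · simp only [Amap, Zpow, coordMap, map_div₀, map_mul, map_sub, map_one, map_pow, hg, h2,
      Prod.mk.injEq]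
    refine ⟨trivial, trivial, ?_⟩
    rw [zpow_sub_one₀ hζ0 p]
    field_simp [sub_ne_zero.mp hgxy]
  · simp only [Zpow, coordMap, map_mul, map_zpow₀, hg, Prod.mk.injEq, ← zpow_mul]
    exact ⟨trivial, trivial, by ring_nf⟩
end

section
/- Let n = 2m be a positive even integer and p an odd integer. Let R be a (possibly noncommutative) ring and a, z, φ ∈ R with z invertible, z·a·z = a, z^m = −1 (hence z^n = 1), and suppose a·φ = φ·a·z^{(1−p)/2} and z·φ = φ·z^p, where z^k for k ∈ ℤ denotes the integer power of the unit z. Set b₊ = (1 + z^{−1})·a, b₋ = (1 − z^{−1})·a, and b = z − z^{−1}. Then: (1) if p ≡ 1 or −1 (mod 2n) then b₊φ = φb₊, while if p ≡ n+1 or n−1 (mod 2n) then b₊φ = −φb₊; (2) if p ≡ 1 or n−1 (mod 2n) then b₋φ = φb₋, while if p ≡ −1 or n+1 (mod 2n) then b₋φ = −φb₋; (3) if p ≡ 1 (mod n) then bφ = φb, while if p ≡ −1 (mod n) then bφ = −φb. -/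
namespace QMFrob

variable {R : Type*} [Ring R]

/-- Integer power of the unit `z`, viewed in `R`. -/
def U (z : Rˣ) (k : ℤ) : R := ((z ^ k : Rˣ) : R)

lemma U_mul (z : Rˣ) (j k : ℤ) : U z j * U z k = U z (j + k) := by
  simp [U, ← Units.val_mul, ← zpow_add]

lemma U_zero (z : Rˣ) : U z 0 = 1 := by simp [U]

lemma U_one (z : Rˣ) : U z 1 = (z : R) := by simp [U]

lemma U_negone (z : Rˣ) : U z (-1) = ((z⁻¹ : Rˣ) : R) := by simp [U]

lemma U_phi (z : Rˣ) (p : ℤ) (φ : R)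
    (hzφ : (z : R) * φ = φ * ((z ^ p : Rˣ) : R)) :
    ∀ k : ℤ, U z k * φ = φ * U z (k * p) := by
  have h1 : U z 1 * φ = φ * U z p := by
    rw [U_one]; exact hzφ
  have hneg1 : U z (-1) * φ = φ * U z (-p) := by
    calc U z (-1) * φ = U z (-1) * φ * (U z p * U z (-p)) := by
          rw [U_mul, add_neg_cancel, U_zero, mul_one]
      _ = U z (-1) * (φ * U z p) * U z (-p) := by
          simp only [mul_assoc]
      _ = U z (-1) * (U z 1 * φ) * U z (-p) := by rw [h1]
      _ = (U z (-1) * U z 1) * φ * U z (-p) := by simp only [mul_assoc]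
      _ = φ * U z (-p) := by rw [U_mul, neg_add_cancel, U_zero, one_mul]
  intro k
  induction k using Int.induction_on with
  | zero => simp [U_zero]
  | succ k ih =>
      calc U z (k + 1) * φ = U z k * (U z 1 * φ) := by
            rw [← U_mul, mul_assoc]
        _ = U z k * φ * U z p := by rw [h1, ← mul_assoc]
        _ = φ * (U z (k * p) * U z p) := by rw [ih, mul_assoc]
        _ = φ * U z ((k + 1) * p) := by rw [U_mul]; ring_nf
  | pred k ih =>
      calc U z (-k - 1) * φ = U z (-k) * (U z (-1) * φ) := by
            rw [← mul_assoc, U_mul]; ring_nf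
        _ = U z (-k) * φ * U z (-p) := by rw [hneg1, ← mul_assoc]
        _ = φ * (U z (-k * p) * U z (-p)) := by rw [ih, mul_assoc]
        _ = φ * U z ((-k - 1) * p) := by rw [U_mul]; ring_nf

lemma U_a (z : Rˣ) (a : R) (hza : (z : R) * a * (z : R) = a) :
    ∀ k : ℤ, a * U z k = U z (-k) * a := by
  have hza1 : U z 1 * a * U z 1 = a := by rw [U_one]; exact hza
  have h1 : a * U z 1 = U z (-1) * a := by
    calc a * U z 1 = (U z (-1) * U z 1) * a * U z 1 := by
          rw [U_mul, neg_add_cancel, U_zero, one_mul]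
      _ = U z (-1) * (U z 1 * a * U z 1) := by
          simp only [mul_assoc]
      _ = U z (-1) * a := by rw [hza1]
  have hneg1 : a * U z (-1) = U z 1 * a := by
    calc a * U z (-1) = (U z 1 * a * U z 1) * U z (-1) := by rw [hza1]
      _ = U z 1 * a * (U z 1 * U z (-1)) := by simp only [mul_assoc]
      _ = U z 1 * a := by rw [U_mul, add_neg_cancel, U_zero, mul_one]
  intro k
  induction k using Int.induction_on with
  | zero => simp [U_zero]
  | succ k ih =>
      calc a * U z (k + 1) = a * U z k * U z 1 := by rw [mul_assoc, U_mul]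
        _ = U z (-k) * (a * U z 1) := by rw [ih, mul_assoc]
        _ = U z (-k) * (U z (-1) * a) := by rw [h1]
        _ = (U z (-k) * U z (-1)) * a := by rw [mul_assoc]
        _ = U z (-(k + 1)) * a := by rw [U_mul]; ring_nf
  | pred k ih =>
      calc a * U z (-k - 1) = a * U z (-k) * U z (-1) := by
            rw [mul_assoc, U_mul]; ring_nf
        _ = U z (-(-k)) * (a * U z (-1)) := by rw [ih, mul_assoc]
        _ = U z (-(-k)) * (U z 1 * a) := by rw [hneg1]
        _ = (U z (-(-k)) * U z 1) * a := by rw [mul_assoc]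
        _ = U z (-(-k - 1)) * a := by rw [U_mul]; ring_nf

lemma U_period (z : Rˣ) (m : ℕ) (hzm : (z : R) ^ m = -1) {s r : ℤ}
    (h : (2 * (m : ℤ)) ∣ s - r) : U z s = U z r := by
  have hz2m : z ^ (2 * (m : ℤ)) = 1 := by
    have h2 : z ^ (2 * (m : ℤ)) = (z ^ m) * (z ^ m) := by
      rw [show (2 * (m : ℤ)) = ((m : ℤ) + m) by ring, zpow_add, zpow_natCast]
    apply Units.ext
    rw [h2]; simp [hzm]
  obtain ⟨t, ht⟩ := h
  have hs : s = r + 2 * (m : ℤ) * t := by linarith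
  rw [hs, ← U_mul]
  have : U z (2 * (m : ℤ) * t) = 1 := by simp [U, zpow_mul, hz2m]
  rw [this, mul_one]

lemma U_m (z : Rˣ) (m : ℕ) (hzm : (z : R) ^ m = -1) : U z (m : ℤ) = -1 := by
  simp [U, hzm]

lemma U_period_neg (z : Rˣ) (m : ℕ) (hzm : (z : R) ^ m = -1) {s r : ℤ}
    (h : (2 * (m : ℤ)) ∣ s - ((m : ℤ) + r)) : U z s = -U z r := by
  rw [U_period z m hzm h, ← U_mul, U_m z m hzm, neg_one_mul]

end QMFrob



/-- **Proposition 5.9(I)** of the paper (algebraic content).  Let `n = 2m` be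
a positive even integer, `p` an odd integer, `R` a ring, `z` a unit of `R`,
and `a, φ ∈ R` with `z·a·z = a`, `z^m = -1`, `a·φ = φ·a·z^{(1-p)/2}` and
`z·φ = φ·z^p`.  Set `b₊ = (1 + z⁻¹)a`, `b₋ = (1 - z⁻¹)a`, `b = z - z⁻¹`.
Then the listed commutation/anticommutation rules with `φ` hold according to
the residue of `p` modulo `2n = 4m` (resp. modulo `n = 2m`). -/
theorem qm_frobenius_commutation {R : Type*} [Ring R]
    (m : ℕ) (hm : 0 < m) (p : ℤ) (hp : Odd p)
    (z : Rˣ) (a φ : R)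
    (hza : (z : R) * a * (z : R) = a)
    (hzm : ((z : R)) ^ m = -1)
    (haφ : a * φ = φ * a * ((z ^ ((1 - p) / 2) : Rˣ) : R))
    (hzφ : (z : R) * φ = φ * ((z ^ p : Rˣ) : R)) :
    ∀ bplus bminus b : R,
      bplus = (1 + ((z⁻¹ : Rˣ) : R)) * a →
      bminus = (1 - ((z⁻¹ : Rˣ) : R)) * a →
      b = (z : R) - ((z⁻¹ : Rˣ) : R) →
      ((p ≡ 1 [ZMOD (4 * (m : ℤ))] ∨ p ≡ -1 [ZMOD (4 * (m : ℤ))]) →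
          bplus * φ = φ * bplus) ∧
      ((p ≡ 2 * (m : ℤ) + 1 [ZMOD (4 * (m : ℤ))]
          ∨ p ≡ 2 * (m : ℤ) - 1 [ZMOD (4 * (m : ℤ))]) →
          bplus * φ = -(φ * bplus)) ∧
      ((p ≡ 1 [ZMOD (4 * (m : ℤ))] ∨ p ≡ 2 * (m : ℤ) - 1 [ZMOD (4 * (m : ℤ))]) →
          bminus * φ = φ * bminus) ∧
      ((p ≡ -1 [ZMOD (4 * (m : ℤ))] ∨ p ≡ 2 * (m : ℤ) + 1 [ZMOD (4 * (m : ℤ))]) →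
          bminus * φ = -(φ * bminus)) ∧
      ((p ≡ 1 [ZMOD (2 * (m : ℤ))]) → b * φ = φ * b) ∧
      ((p ≡ -1 [ZMOD (2 * (m : ℤ))]) → b * φ = -(φ * b)) := by

  intro bplus bminus b hbp hbm hb
  obtain ⟨c, hc⟩ := hp
  open QMFrob in
  set M : ℤ := (m : ℤ) with hM
  set q : ℤ := (1 - p) / 2 with hqdef
  have hq : 2 * q = 1 - p := by omega
  have hφk := QMFrob.U_phi z p φ hzφ
  have hak := QMFrob.U_a z a hza
  have hper : ∀ {s r : ℤ}, (2 * M) ∣ s - r → QMFrob.U z s = QMFrob.U z r :=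
    fun h => QMFrob.U_period z m hzm h
  have hperneg : ∀ {s r : ℤ}, (2 * M) ∣ s - (M + r) →
      QMFrob.U z s = -QMFrob.U z r :=
    fun h => QMFrob.U_period_neg z m hzm h
  have hU1φ : QMFrob.U z 1 * φ = φ * QMFrob.U z p := by simpa using hφk 1
  have hUn1φ : QMFrob.U z (-1) * φ = φ * QMFrob.U z (-p) := by simpa using hφk (-1)
  have ha1 : a * QMFrob.U z 1 = QMFrob.U z (-1) * a := by simpa using hak 1
  have haφ' : a * φ = φ * a * QMFrob.U z q := haφ
  have hstep : QMFrob.U z (-1) * a * φ = φ * a * QMFrob.U z (q + p) := by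
    calc QMFrob.U z (-1) * a * φ = a * QMFrob.U z 1 * φ := by rw [← ha1]
      _ = a * (QMFrob.U z 1 * φ) := by rw [mul_assoc]
      _ = a * (φ * QMFrob.U z p) := by rw [hU1φ]
      _ = (a * φ) * QMFrob.U z p := by rw [mul_assoc]
      _ = φ * a * QMFrob.U z q * QMFrob.U z p := by rw [haφ']
      _ = φ * a * QMFrob.U z (q + p) := by rw [mul_assoc (φ * a), QMFrob.U_mul]
  have hbp_eq : bplus * φ = φ * a * QMFrob.U z q + φ * a * QMFrob.U z (q + p) := by
    rw [hbp, ← QMFrob.U_negone, add_mul, one_mul, add_mul, haφ', hstep]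
  have hφbp_eq : φ * bplus = φ * a * QMFrob.U z 0 + φ * a * QMFrob.U z 1 := by
    rw [hbp, ← QMFrob.U_negone, add_mul, one_mul, ← ha1, mul_add,
      QMFrob.U_zero, mul_one]
    simp only [mul_assoc]
  have hbm_eq : bminus * φ = φ * a * QMFrob.U z q - φ * a * QMFrob.U z (q + p) := by
    rw [hbm, ← QMFrob.U_negone, sub_mul, one_mul, sub_mul, haφ', hstep]
  have hφbm_eq : φ * bminus = φ * a * QMFrob.U z 0 - φ * a * QMFrob.U z 1 := by
    rw [hbm, ← QMFrob.U_negone, sub_mul, one_mul, ← ha1, mul_sub,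
      QMFrob.U_zero, mul_one]
    simp only [mul_assoc]
  have hbφ_eq : b * φ = φ * QMFrob.U z p - φ * QMFrob.U z (-p) := by
    rw [hb, ← QMFrob.U_negone, ← QMFrob.U_one, sub_mul, hU1φ, hUn1φ]
  have hφb_eq : φ * b = φ * QMFrob.U z 1 - φ * QMFrob.U z (-1) := by
    rw [hb, ← QMFrob.U_negone, ← QMFrob.U_one, mul_sub]
  refine ⟨?_, ?_, ?_, ?_, ?_, ?_⟩
  · rintro (h | h)
    · obtain ⟨t, ht⟩ := h.dvd
      have e1 : QMFrob.U z q = QMFrob.U z 0 := hper ⟨t, by linarith⟩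
      have e2 : QMFrob.U z (q + p) = QMFrob.U z 1 := hper ⟨-t, by linarith⟩
      rw [hbp_eq, hφbp_eq, e1, e2]
    · obtain ⟨t, ht⟩ := h.dvd
      have e1 : QMFrob.U z q = QMFrob.U z 1 := hper ⟨t, by linarith⟩
      have e2 : QMFrob.U z (q + p) = QMFrob.U z 0 := hper ⟨-t, by linarith⟩
      rw [hbp_eq, hφbp_eq, e1, e2]; noncomm_ring
  · rintro (h | h)
    · obtain ⟨t, ht⟩ := h.dvd
      have e1 : QMFrob.U z q = -QMFrob.U z 0 := hperneg ⟨t - 1, by linarith⟩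
      have e2 : QMFrob.U z (q + p) = -QMFrob.U z 1 := hperneg ⟨-t, by linarith⟩
      rw [hbp_eq, hφbp_eq, e1, e2]; noncomm_ring
    · obtain ⟨t, ht⟩ := h.dvd
      have e1 : QMFrob.U z q = -QMFrob.U z 1 := hperneg ⟨t - 1, by linarith⟩
      have e2 : QMFrob.U z (q + p) = -QMFrob.U z 0 := hperneg ⟨-t, by linarith⟩
      rw [hbp_eq, hφbp_eq, e1, e2]; noncomm_ring
  · rintro (h | h)
    · obtain ⟨t, ht⟩ := h.dvd
      have e1 : QMFrob.U z q = QMFrob.U z 0 := hper ⟨t, by linarith⟩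
      have e2 : QMFrob.U z (q + p) = QMFrob.U z 1 := hper ⟨-t, by linarith⟩
      rw [hbm_eq, hφbm_eq, e1, e2]
    · obtain ⟨t, ht⟩ := h.dvd
      have e1 : QMFrob.U z q = -QMFrob.U z 1 := hperneg ⟨t - 1, by linarith⟩
      have e2 : QMFrob.U z (q + p) = -QMFrob.U z 0 := hperneg ⟨-t, by linarith⟩
      rw [hbm_eq, hφbm_eq, e1, e2]; noncomm_ring
  · rintro (h | h)
    · obtain ⟨t, ht⟩ := h.dvd
      have e1 : QMFrob.U z q = QMFrob.U z 1 := hper ⟨t, by linarith⟩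
      have e2 : QMFrob.U z (q + p) = QMFrob.U z 0 := hper ⟨-t, by linarith⟩
      rw [hbm_eq, hφbm_eq, e1, e2]; noncomm_ring
    · obtain ⟨t, ht⟩ := h.dvd
      have e1 : QMFrob.U z q = -QMFrob.U z 0 := hperneg ⟨t - 1, by linarith⟩
      have e2 : QMFrob.U z (q + p) = -QMFrob.U z 1 := hperneg ⟨-t, by linarith⟩
      rw [hbm_eq, hφbm_eq, e1, e2]; noncomm_ring
  · intro h
    obtain ⟨t, ht⟩ := h.dvd
    have e1 : QMFrob.U z p = QMFrob.U z 1 := hper ⟨-t, by linarith⟩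
    have e2 : QMFrob.U z (-p) = QMFrob.U z (-1) := hper ⟨t, by linarith⟩
    rw [hbφ_eq, hφb_eq, e1, e2]
  · intro h
    obtain ⟨t, ht⟩ := h.dvd
    have e1 : QMFrob.U z p = QMFrob.U z (-1) := hper ⟨-t, by linarith⟩
    have e2 : QMFrob.U z (-p) = QMFrob.U z 1 := hper ⟨t, by linarith⟩
    rw [hbφ_eq, hφb_eq, e1, e2]; noncomm_ring
end

section
/- Let ℓ be a prime and let κ ≥ 2 and f ≥ 1 be integers with ℓ − 1 > 6κ. Let a = ∑_{i=0}^{f−1} a_i ℓ^i and b = ∑_{i=0}^{f−1} b_i ℓ^i be integers, where for each i the pair (a_i, b_i) satisfies {a_i, b_i} = {0, 1−κ} as sets (i.e. one of a_i, b_i equals 0 and the other equals 1−κ). Then the three integers 6a, 3(a+b), 6b are pairwise incongruent modulo ℓ^f − 1. -/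
/-- The key arithmetic step in the proof of Proposition 3.5 of the paper.
Let `ℓ` be a prime, `κ ≥ 2`, `f ≥ 1` with `ℓ - 1 > 6κ`.  Let
`a = ∑_{i<f} aᵢ ℓ^i` and `b = ∑_{i<f} bᵢ ℓ^i` where for each `i` the pair
`{aᵢ, bᵢ}` equals `{0, 1-κ}` as a set.  Then `6a`, `3(a+b)`, `6b` are
pairwise incongruent modulo `ℓ^f - 1`. -/
theorem fundamental_character_exponents
    (ℓ : ℕ) (hℓ : ℓ.Prime) (κ f : ℕ) (hκ : 2 ≤ κ) (hf : 1 ≤ f)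
    (hℓκ : 6 * (κ : ℤ) < (ℓ : ℤ) - 1)
    (A B : Fin f → ℤ)
    (hAB : ∀ i, ({A i, B i} : Set ℤ) = {0, 1 - (κ : ℤ)})
    (a b : ℤ)
    (ha : a = ∑ i : Fin f, A i * (ℓ : ℤ) ^ (i : ℕ))
    (hb : b = ∑ i : Fin f, B i * (ℓ : ℤ) ^ (i : ℕ)) :
    ¬ (6 * a ≡ 3 * (a + b) [ZMOD ((ℓ : ℤ) ^ f - 1)]) ∧
    ¬ (6 * a ≡ 6 * b [ZMOD ((ℓ : ℤ) ^ f - 1)]) ∧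
    ¬ (3 * (a + b) ≡ 6 * b [ZMOD ((ℓ : ℤ) ^ f - 1)]) := by
  have hℓ2 : (2:ℤ) ≤ ℓ := by exact_mod_cast hℓ.two_le
  have hD : ∀ i, A i - B i = 1 - (κ:ℤ) ∨ A i - B i = (κ:ℤ) - 1 := by
    intro i
    rcases Set.pair_eq_pair_iff.mp (hAB i) with ⟨h1, h2⟩ | ⟨h1, h2⟩
    · right; omega
    · left; omega
  have hDabs : ∀ i, |A i - B i| = (κ:ℤ) - 1 := by
    intro i
    rcases hD i with h | h <;> rw [h] <;> [rw [abs_of_nonpos (by omega)]; rw [abs_of_nonneg (by omega)]] <;> ring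
  have hd : a - b = ∑ i : Fin f, (A i - B i) * (ℓ : ℤ) ^ (i : ℕ) := by
    rw [ha, hb, ← Finset.sum_sub_distrib]; congr 1; ext i; ring
  set S : ℤ := ∑ i ∈ Finset.range f, (ℓ:ℤ)^i with hS
  have hSpos : 0 < S := by
    apply Finset.sum_pos (fun i _ => by positivity)
    exact Finset.nonempty_range_iff.mpr (by omega)
  have hgeom : ((ℓ:ℤ) - 1) * S = (ℓ:ℤ)^f - 1 := by
    rw [hS, mul_comm, geom_sum_mul]
  have habs : |a - b| ≤ ((κ:ℤ) - 1) * S := by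
    rw [hd]
    calc |∑ i : Fin f, (A i - B i) * (ℓ : ℤ) ^ (i : ℕ)|
        ≤ ∑ i : Fin f, |(A i - B i) * (ℓ : ℤ) ^ (i : ℕ)| := Finset.abs_sum_le_sum_abs _ _
      _ = ∑ i : Fin f, ((κ:ℤ) - 1) * (ℓ : ℤ) ^ (i : ℕ) := by
          refine Finset.sum_congr rfl fun i _ => ?_
          rw [abs_mul, hDabs i, abs_of_nonneg (by positivity)]
      _ = ((κ:ℤ) - 1) * S := by
          rw [← Finset.mul_sum, hS, Fin.sum_univ_eq_sum_range (fun i => (ℓ:ℤ)^i)]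
  have hbound : 6 * |a - b| < (ℓ:ℤ)^f - 1 := by
    rw [← hgeom]
    nlinarith [hSpos, habs, hℓκ]
  -- nonzeroness
  have hne : a - b ≠ 0 := by
    obtain ⟨f', rfl⟩ : ∃ f', f = f' + 1 := ⟨f - 1, by omega⟩
    have hsplit : a - b = (A 0 - B 0) + ∑ i : Fin f', (A i.succ - B i.succ) * (ℓ : ℤ) ^ ((i : ℕ) + 1) := by
      rw [hd, Fin.sum_univ_succ]; simp
    have hdvd : (ℓ:ℤ) ∣ ∑ i : Fin f', (A i.succ - B i.succ) * (ℓ : ℤ) ^ ((i : ℕ) + 1) := by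
      refine Finset.dvd_sum fun i _ => ⟨(A i.succ - B i.succ) * (ℓ : ℤ) ^ (i : ℕ), by ring⟩
    intro h0
    have : (ℓ:ℤ) ∣ (A 0 - B 0) := by
      have := hdvd
      rw [show (∑ i : Fin f', (A i.succ - B i.succ) * (ℓ : ℤ) ^ ((i : ℕ) + 1)) = -(A 0 - B 0) by omega] at this
      exact (dvd_neg).mp this
    have h1 := Int.eq_zero_of_abs_lt_dvd this (by rw [hDabs 0]; omega)
    have h2 := hDabs 0
    rw [h1] at h2
    simp at h2
    omega
  have key : ∀ c : ℤ, 0 < c → c ≤ 6 → ¬ ((ℓ:ℤ)^f - 1 ∣ c * (a - b)) := by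
    intro c hc hc6 hdvd
    have := Int.eq_zero_of_abs_lt_dvd hdvd (by
      rw [abs_mul, abs_of_pos hc]
      calc c * |a - b| ≤ 6 * |a - b| := by
            have := abs_nonneg (a - b); nlinarith
        _ < (ℓ:ℤ)^f - 1 := hbound)
    exact hne ((mul_eq_zero.mp this).resolve_left (by omega))
  refine ⟨fun h => ?_, fun h => ?_, fun h => ?_⟩
  · have := Int.ModEq.dvd h
    have : ((ℓ:ℤ)^f - 1) ∣ 3 * (a - b) := by
      have h3 : 3 * (a + b) - 6 * a = -(3 * (a - b)) := by ring
      rw [h3] at this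
      exact (dvd_neg).mp this
    exact key 3 (by norm_num) (by norm_num) this
  · have := Int.ModEq.dvd h
    have : ((ℓ:ℤ)^f - 1) ∣ 6 * (a - b) := by
      have h3 : 6 * b - 6 * a = -(6 * (a - b)) := by ring
      rw [h3] at this
      exact (dvd_neg).mp this
    exact key 6 (by norm_num) (by norm_num) this
  · have := Int.ModEq.dvd h
    have : ((ℓ:ℤ)^f - 1) ∣ 3 * (a - b) := by
      have h3 : 6 * b - 3 * (a + b) = -(3 * (a - b)) := by ring
      rw [h3] at this
      exact (dvd_neg).mp this
    exact key 3 (by norm_num) (by norm_num) this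
end
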